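/- Under the hypotheses of the preceding construction (orthonormal basis of subspaces {E_i}, T surjective satisfying the uniform angle condition, W_i = T(E_i), admissible weights w), if additionally ker T ∩ E_i = {0} for every i ∈ I, then the excess of the fusion frame (w_i, W_i) equals dim ker T. -/

import Mathlib

noncomputable section

open scoped InnerProductSpace ENNReal

universe u
variable {H K : Type u} [NormedAddCommGroup H] [InnerProductSpace ℂ H] [CompleteSpace H]
  [NormedAddCommGroup K] [InnerProductSpace ℂ K] [CompleteSpace K]

/-- Orthogonal projection onto (the closure of) a subspace, as an operator `H →L[ℂ] H`. -/
def sproj (M : Submodule ℂ H) : H →L[ℂ] H :=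
  M.topologicalClosure.subtypeL ∘L M.topologicalClosure.orthogonalProjectionOnto

/-- The reduced minimum modulus of a bounded operator. -/
def gammaRMM (T : H →L[ℂ] K) : ℝ :=
  sInf ((fun x => ‖T x‖) '' {x : H | x ∈ (LinearMap.ker (T : H →ₗ[ℂ] K))ᗮ ∧ ‖x‖ = 1})

/-- `M ⊖ N`. -/
def ominus (M N : Submodule ℂ H) : Submodule ℂ H := M ⊓ (M ⊓ N)ᗮ

open Classical in
/-- The cosine of the Friedrichs angle between two subspaces. -/
def angleCos (M N : Submodule ℂ H) : ℝ :=
  if M ≤ N ∨ N ≤ M then 0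
  else sSup {r : ℝ | ∃ x ∈ ominus M N, ∃ y ∈ ominus N M,
    ‖x‖ = 1 ∧ ‖y‖ = 1 ∧ r = ‖(inner ℂ x y : ℂ)‖}

/-- The sine of the Friedrichs angle. -/
def angleSin (M N : Submodule ℂ H) : ℝ := Real.sqrt (1 - angleCos M N ^ 2)

variable {I : Type u}

/-- `(w i, W i)` is a fusion frame (frame of subspaces) with bounds `A`, `B`. -/
def IsFusionFrameWith (w : I → ℝ) (W : I → Submodule ℂ H) (A B : ℝ) : Prop :=
  0 < A ∧ 0 < B ∧ (∀ i, IsClosed (W i : Set H)) ∧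
    ∀ f : H, A * ‖f‖ ^ 2 ≤ ∑' i, w i ^ 2 * ‖sproj (W i) f‖ ^ 2 ∧
      ∑' i, w i ^ 2 * ‖sproj (W i) f‖ ^ 2 ≤ B * ‖f‖ ^ 2

/-- `(w i, W i)` is a fusion frame for some bounds. -/
def IsFusionFrame (w : I → ℝ) (W : I → Submodule ℂ H) : Prop :=
  ∃ A B : ℝ, IsFusionFrameWith w W A B

/-- a family of mutually orthogonal closed subspaces with dense span. -/
def IsOBS (E : I → Submodule ℂ H) : Prop :=
  (∀ i, IsClosed (E i : Set H)) ∧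
  (∀ i j, i ≠ j → ∀ x ∈ E i, ∀ y ∈ E j, (inner ℂ x y : ℂ) = 0) ∧
  (⨆ i, E i).topologicalClosure = ⊤

/-- A minimal sequence of subspaces. -/
def IsMinimal (W : I → Submodule ℂ H) : Prop :=
  ∀ i, W i ⊓ (⨆ j ∈ {j : I | j ≠ i}, W j).topologicalClosure = ⊥

/-- The kernel of the synthesis operator of `(w i, W i)`, as a subspace of `⊕₂ W i`. -/
def synthesisKernel (w : I → ℝ) (W : I → Submodule ℂ H) :
    Submodule ℂ (lp (fun i => W i) 2) where
  carrier := {g | ∀ f : H, HasSum (fun i => (w i : ℂ) * (inner ℂ ((g i : H)) f : ℂ)) 0}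
  zero_mem' := by
    intro f
    have : (fun i => (w i : ℂ) * (inner ℂ (((0 : lp (fun i => W i) 2) i : H)) f : ℂ)) =
        fun _ => 0 := by
      funext i; simp [lp.coeFn_zero]
    rw [this]; exact hasSum_zero
  add_mem' := by
    intro a b ha hb f
    have h := (ha f).add (hb f)
    rw [add_zero] at h
    have he : (fun i => (w i : ℂ) * (inner ℂ (((a + b) i : H)) f : ℂ)) =
        fun i => (w i : ℂ) * (inner ℂ ((a i : H)) f : ℂ) +
          (w i : ℂ) * (inner ℂ ((b i : H)) f : ℂ) := by
      funext i
      have h2 : ((a + b) i : ↥(W i)) = a i + b i := by rw [lp.coeFn_add]; rfl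
      rw [h2, Submodule.coe_add, inner_add_left]; ring
    rw [he]; exact h
  smul_mem' := by
    intro c a ha f
    have h := (ha f).mul_left (starRingEnd ℂ c)
    rw [mul_zero] at h
    have he : (fun i => (w i : ℂ) * (inner ℂ (((c • a) i : H)) f : ℂ)) =
        fun i => (starRingEnd ℂ c) * ((w i : ℂ) * (inner ℂ ((a i : H)) f : ℂ)) := by
      funext i
      have h2 : ((c • a) i : ↥(W i)) = c • a i := by rw [lp.coeFn_smul]; rfl
      rw [h2, Submodule.coe_smul, inner_smul_left]; ring
    rw [he]; exact h

/-- The excess of a fusion frame. -/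
def fusionExcess (w : I → ℝ) (W : I → Submodule ℂ H) : Cardinal :=
  Module.rank ℂ (synthesisKernel w W)



/-- Auxiliary: a pointwise norm comparison transfers `Memℓp · 2`. -/
private lemma memℓp_two_of_le {ι : Type*} {X Y : ι → Type*}
    [∀ i, NormedAddCommGroup (X i)] [∀ i, NormedAddCommGroup (Y i)]
    {a : ∀ i, X i} {b : ∀ i, Y i} {C : ℝ} (hC : 0 ≤ C)
    (ha : Memℓp a 2) (h : ∀ i, ‖b i‖ ≤ C * ‖a i‖) : Memℓp b 2 := by
  have htr : (2 : ℝ≥0∞).toReal = 2 := by norm_num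
  apply memℓp_gen
  have hs : Summable fun i => ‖a i‖ ^ (2 : ℝ≥0∞).toReal :=
    ha.summable (by norm_num)
  refine Summable.of_nonneg_of_le (fun i => Real.rpow_nonneg (norm_nonneg _) _)
    (fun i => ?_) (hs.mul_left (C ^ (2 : ℝ≥0∞).toReal))
  calc ‖b i‖ ^ (2 : ℝ≥0∞).toReal ≤ (C * ‖a i‖) ^ (2 : ℝ≥0∞).toReal :=
        Real.rpow_le_rpow (norm_nonneg _) (h i) (by norm_num)
    _ = C ^ (2 : ℝ≥0∞).toReal * ‖a i‖ ^ (2 : ℝ≥0∞).toReal :=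
        Real.mul_rpow hC (norm_nonneg _)

theorem fusionExcess_eq_rank_ker {I : Type u} (E : I → Submodule ℂ K) (hE : IsOBS E)
    (T : K →L[ℂ] H) (hT : Function.Surjective T) (A B : ℝ) (hA : 0 < A) (hB : 0 < B)
    (w : I → ℝ) (hw : ∀ i, 0 < w i) (hwb : BddAbove (Set.range w))
    (hwi : ∀ i, ‖T ∘L sproj (E i)‖ ^ 2 / B ≤ w i ^ 2 ∧
      w i ^ 2 ≤ gammaRMM (T ∘L sproj (E i)) ^ 2 / A)
    (hker : ∀ i, LinearMap.ker (T : K →ₗ[ℂ] H) ⊓ E i = ⊥) :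
    fusionExcess w (fun i => (E i).map (T : K →ₗ[ℂ] H)) = Module.rank ℂ (LinearMap.ker (T : K →ₗ[ℂ] H)) := by
  classical
  set W : I → Submodule ℂ H := fun i => (E i).map (T : K →ₗ[ℂ] H) with hWdef
  have hEc : ∀ i, IsClosed ((E i : Set K)) := hE.1
  have hEtc : ∀ i, (E i).topologicalClosure = E i := fun i =>
    (hEc i).submodule_topologicalClosure_eq
  haveI : ∀ i, CompleteSpace (E i) := fun i => (hEc i).completeSpace_coe
  -- basic facts about `sproj (E i)`
  have hsproj_mem : ∀ i (x : K), sproj (E i) x ∈ E i := by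
    intro i x
    exact (le_of_eq (hEtc i)) ((E i).topologicalClosure.orthogonalProjectionOnto x).2
  have hsproj_id : ∀ i (x : K), x ∈ E i → sproj (E i) x = x := by
    intro i x hx
    show (E i).topologicalClosure.starProjection x = x
    rw [Submodule.starProjection_eq_self_iff, hEtc i]
    exact hx
  -- lower norm bound on `E i`
  have low : ∀ i, ∀ x ∈ E i, Real.sqrt A * w i * ‖x‖ ≤ ‖T x‖ := by
    intro i x hx
    rcases eq_or_ne x 0 with rfl | hx0
    · simp
    set S := T ∘L sproj (E i) with hS
    have hmemperp : x ∈ (LinearMap.ker (S : K →ₗ[ℂ] H))ᗮ := by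
      rw [Submodule.mem_orthogonal]
      intro u hu
      have h1 : T (sproj (E i) u) = 0 := LinearMap.mem_ker.mp hu
      have h2 : sproj (E i) u ∈ LinearMap.ker (T : K →ₗ[ℂ] H) ⊓ E i :=
        ⟨LinearMap.mem_ker.mpr h1, hsproj_mem i u⟩
      rw [hker i, Submodule.mem_bot] at h2
      have h3 : (E i).topologicalClosure.orthogonalProjectionOnto u = 0 := by
        exact Subtype.ext h2
      have h4 : u ∈ ((E i).topologicalClosure)ᗮ :=
        Submodule.orthogonalProjectionOnto_eq_zero_iff.mp h3
      rw [hEtc i] at h4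
      exact inner_eq_zero_symm.mp ((Submodule.mem_orthogonal _ _).mp h4 x hx)
    have hxn : ‖x‖ ≠ 0 := norm_ne_zero_iff.2 hx0
    set c : ℂ := ((‖x‖⁻¹ : ℝ) : ℂ) with hc
    set u : K := c • x with hu
    have hcn : ‖c‖ = ‖x‖⁻¹ := by
      rw [hc, Complex.norm_real, Real.norm_eq_abs, abs_of_nonneg (by positivity)]
    have hu_norm : ‖u‖ = 1 := by
      rw [hu, norm_smul, hcn]
      field_simp
    have hu_mem : u ∈ (LinearMap.ker (S : K →ₗ[ℂ] H))ᗮ := Submodule.smul_mem _ _ hmemperp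
    have hu_memE : u ∈ E i := Submodule.smul_mem _ _ hx
    have hSu : ‖S u‖ = ‖x‖⁻¹ * ‖T x‖ := by
      have h5 : S u = c • T x := by
        show T (sproj (E i) u) = c • T x
        rw [hsproj_id i u hu_memE, hu, map_smul]
      rw [h5, norm_smul, hcn]
    have hbdd : BddBelow ((fun x => ‖S x‖) '' {x : K | x ∈ (LinearMap.ker (S : K →ₗ[ℂ] H))ᗮ ∧ ‖x‖ = 1}) := by
      refine ⟨0, ?_⟩
      rintro r ⟨y, -, rfl⟩
      exact norm_nonneg _
    have hne : ‖S u‖ ∈ (fun x => ‖S x‖) '' {x : K | x ∈ (LinearMap.ker (S : K →ₗ[ℂ] H))ᗮ ∧ ‖x‖ = 1} :=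
      ⟨u, ⟨hu_mem, hu_norm⟩, rfl⟩
    have hγle : gammaRMM S ≤ ‖S u‖ := csInf_le hbdd hne
    have hγ0 : 0 ≤ gammaRMM S := by
      refine le_csInf ⟨_, hne⟩ ?_
      rintro r ⟨y, -, rfl⟩
      exact norm_nonneg _
    have h2 := (hwi i).2
    rw [le_div_iff₀ hA] at h2
    have hsq : A * w i ^ 2 ≤ gammaRMM S ^ 2 := by nlinarith
    have hAw : Real.sqrt A * w i ≤ gammaRMM S := by
      have h6 : Real.sqrt (A * w i ^ 2) ≤ Real.sqrt (gammaRMM S ^ 2) :=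
        Real.sqrt_le_sqrt hsq
      rwa [Real.sqrt_mul hA.le, Real.sqrt_sq (hw i).le, Real.sqrt_sq hγ0] at h6
    have h7 : Real.sqrt A * w i * ‖x‖ ≤ ‖S u‖ * ‖x‖ := by
      have := hAw.trans hγle
      exact mul_le_mul_of_nonneg_right this (norm_nonneg _)
    calc Real.sqrt A * w i * ‖x‖ ≤ ‖S u‖ * ‖x‖ := h7
      _ = ‖T x‖ := by rw [hSu]; field_simp
  -- upper norm bound on `E i`
  have up : ∀ i, ∀ x ∈ E i, ‖T x‖ ≤ Real.sqrt B * w i * ‖x‖ := by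
    intro i x hx
    set S := T ∘L sproj (E i) with hS
    have h1 : T x = S x := by
      show T x = T (sproj (E i) x)
      rw [hsproj_id i x hx]
    have h3 : ‖S‖ ≤ Real.sqrt B * w i := by
      have h4 := (hwi i).1
      rw [div_le_iff₀ hB] at h4
      have h5 : Real.sqrt (‖S‖ ^ 2) ≤ Real.sqrt (w i ^ 2 * B) := Real.sqrt_le_sqrt h4
      rwa [Real.sqrt_sq (norm_nonneg _), Real.sqrt_mul (sq_nonneg _),
        Real.sqrt_sq (hw i).le, mul_comm] at h5
    calc ‖T x‖ = ‖S x‖ := by rw [h1]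
      _ ≤ ‖S‖ * ‖x‖ := S.le_opNorm x
      _ ≤ Real.sqrt B * w i * ‖x‖ := mul_le_mul_of_nonneg_right h3 (norm_nonneg _)
  -- injectivity of T on each E i
  have hTinj : ∀ i, ∀ x ∈ E i, T x = 0 → x = 0 := by
    intro i x hx hTx
    have h1 := low i x hx
    rw [hTx, norm_zero] at h1
    have hA' : 0 < Real.sqrt A := Real.sqrt_pos.2 hA
    have hpos : 0 < Real.sqrt A * w i := mul_pos hA' (hw i)
    have h2 : Real.sqrt A * w i * ‖x‖ ≤ Real.sqrt A * w i * 0 := by simpa using h1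
    exact norm_le_zero_iff.mp (le_of_mul_le_mul_left h2 hpos)
  have hw0 : ∀ i, (w i : ℂ) ≠ 0 := fun i => by
    exact_mod_cast (hw i).ne'
  -- componentwise linear maps
  let φ : ∀ i, E i →ₗ[ℂ] W i := fun i =>
    { toFun := fun x => ⟨(w i : ℂ)⁻¹ • T x,
        Submodule.smul_mem _ _ (Submodule.mem_map.mpr ⟨x, x.2, rfl⟩)⟩
      map_add' := by
        intro x y
        ext
        simp [smul_add]
      map_smul' := by
        intro m x
        ext
        simp only [Submodule.coe_smul, map_smul, RingHom.id_apply]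
        rw [smul_comm] }
  have φbij : ∀ i, Function.Bijective (φ i) := by
    intro i
    constructor
    · intro x y hxy
      have h1 : (w i : ℂ)⁻¹ • T x = (w i : ℂ)⁻¹ • T y := congrArg Subtype.val hxy
      have h2 : T ((x : K) - y) = 0 := by
        rw [map_sub, sub_eq_zero]
        exact smul_right_injective _ (inv_ne_zero (hw0 i)) h1
      have h3 : ((x : K) - y) = 0 := hTinj i _ (Submodule.sub_mem _ x.2 y.2) h2
      exact Subtype.ext (sub_eq_zero.mp h3)
    · rintro ⟨y, hy⟩
      obtain ⟨x, hx, hTx⟩ := Submodule.mem_map.mp hy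
      refine ⟨(w i : ℂ) • ⟨x, hx⟩, ?_⟩
      ext
      show (w i : ℂ)⁻¹ • T ((w i : ℂ) • x) = y
      rw [map_smul, inv_smul_smul₀ (hw0 i)]; exact hTx
  let ρ : ∀ i, E i ≃ₗ[ℂ] W i := fun i => LinearEquiv.ofBijective (φ i) (φbij i)
  have hρ_coe : ∀ i (x : E i), ((ρ i x : H)) = (w i : ℂ)⁻¹ • T x := fun i x => rfl
  have hρ_norm : ∀ i (x : E i), ‖(ρ i x : W i)‖ = (w i)⁻¹ * ‖T (x : K)‖ := by
    intro i x
    show ‖((ρ i x : H))‖ = _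
    rw [hρ_coe, norm_smul, norm_inv, Complex.norm_real, Real.norm_eq_abs,
      abs_of_pos (hw i)]
  have hρ_up : ∀ i (x : E i), ‖ρ i x‖ ≤ Real.sqrt B * ‖x‖ := by
    intro i x
    rw [hρ_norm]
    have hwne : w i ≠ 0 := (hw i).ne'
    have h1 := up i x x.2
    have h2 : (w i)⁻¹ * ‖T (x : K)‖ ≤ (w i)⁻¹ * (Real.sqrt B * w i * ‖x‖) :=
      mul_le_mul_of_nonneg_left h1 (inv_nonneg.mpr (hw i).le)
    calc (w i)⁻¹ * ‖T (x : K)‖ ≤ (w i)⁻¹ * (Real.sqrt B * w i * ‖x‖) := h2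
      _ = Real.sqrt B * ‖(x : K)‖ := by field_simp; rfl
  have hρ_low : ∀ i (x : E i), Real.sqrt A * ‖x‖ ≤ ‖ρ i x‖ := by
    intro i x
    rw [hρ_norm]
    have hwne : w i ≠ 0 := (hw i).ne'
    have h1 := low i x x.2
    have h2 : (w i)⁻¹ * (Real.sqrt A * w i * ‖(x : K)‖) ≤ (w i)⁻¹ * ‖T (x : K)‖ :=
      mul_le_mul_of_nonneg_left h1 (inv_nonneg.mpr (hw i).le)
    calc Real.sqrt A * ‖(x : K)‖ = (w i)⁻¹ * (Real.sqrt A * w i * ‖(x : K)‖) := by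
          field_simp
      _ ≤ (w i)⁻¹ * ‖T (x : K)‖ := h2
  have hρ_symm : ∀ i (y : W i), ‖(ρ i).symm y‖ ≤ (Real.sqrt A)⁻¹ * ‖y‖ := by
    intro i y
    have h1 := hρ_low i ((ρ i).symm y)
    rw [LinearEquiv.apply_symm_apply] at h1
    have hA' : 0 < Real.sqrt A := Real.sqrt_pos.2 hA
    calc ‖(ρ i).symm y‖ = (Real.sqrt A)⁻¹ * (Real.sqrt A * ‖(ρ i).symm y‖) := by
          field_simp
      _ ≤ (Real.sqrt A)⁻¹ * ‖y‖ := mul_le_mul_of_nonneg_left h1 (by positivity)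
  -- the ℓ² level equivalence
  have memF : ∀ a : lp (fun i => (E i : Type u)) 2, Memℓp (fun i => ρ i (a i)) 2 := by
    intro a
    exact memℓp_two_of_le (Real.sqrt_nonneg B) (lp.memℓp a) (fun i => hρ_up i (a i))
  have memG : ∀ g : lp (fun i => (W i : Type u)) 2, Memℓp (fun i => (ρ i).symm (g i)) 2 := by
    intro g
    exact memℓp_two_of_le (inv_nonneg.mpr (Real.sqrt_nonneg A)) (lp.memℓp g)
      (fun i => hρ_symm i (g i))
  let Dfun : lp (fun i => (E i : Type u)) 2 → lp (fun i => (W i : Type u)) 2 :=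
    fun a => ⟨fun i => ρ i (a i), memF a⟩
  let Gfun : lp (fun i => (W i : Type u)) 2 → lp (fun i => (E i : Type u)) 2 :=
    fun g => ⟨fun i => (ρ i).symm (g i), memG g⟩
  let D : lp (fun i => (E i : Type u)) 2 ≃ₗ[ℂ] lp (fun i => (W i : Type u)) 2 :=
    { toFun := Dfun
      invFun := Gfun
      map_add' := by
        intro a b
        apply Subtype.ext
        funext i
        have ha : (a + b) i = a i + b i := by rw [lp.coeFn_add]; rfl
        have hd : (Dfun a + Dfun b) i = Dfun a i + Dfun b i := by rw [lp.coeFn_add]; rfl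
        show ρ i ((a + b) i) = (Dfun a + Dfun b) i
        rw [hd, ha, map_add]
      map_smul' := by
        intro c a
        apply Subtype.ext
        funext i
        have ha : (c • a) i = c • a i := by rw [lp.coeFn_smul]; rfl
        have hd : (c • Dfun a) i = c • Dfun a i := by rw [lp.coeFn_smul]; rfl
        show ρ i ((c • a) i) = (c • Dfun a) i
        rw [hd, ha, map_smul]
      left_inv := by
        intro a
        apply Subtype.ext
        funext i
        show (ρ i).symm (ρ i (a i)) = a i
        exact (ρ i).symm_apply_apply (a i)
      right_inv := by
        intro g
        apply Subtype.ext
        funext i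
        show ρ i ((ρ i).symm (g i)) = g i
        exact (ρ i).apply_symm_apply (g i) }
  -- the Hilbert sum structure on K
  have horth : OrthogonalFamily ℂ (fun i => (E i : Type u)) (fun i => (E i).subtypeₗᵢ) := by
    intro i j hij x y
    exact hE.2.1 i j hij x x.2 y y.2
  have hHS : IsHilbertSum ℂ (fun i => (E i : Type u)) (fun i => (E i).subtypeₗᵢ) :=
    IsHilbertSum.mkInternal _ horth (le_of_eq hE.2.2.symm)
  let U := hHS.linearIsometryEquiv
  let e : K ≃ₗ[ℂ] lp (fun i => (W i : Type u)) 2 := U.toLinearEquiv.trans D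
  -- key characterization of the synthesis kernel
  have key : ∀ g : lp (fun i => (W i : Type u)) 2,
      g ∈ synthesisKernel w W ↔ T (e.symm g) = 0 := by
    intro g
    set a := D.symm g with ha
    have hae : e.symm g = U.symm a := rfl
    have h1 : HasSum (fun i => ((a i : K))) (U.symm a) := by
      have h := hHS.hasSum_linearIsometryEquiv_symm a
      simpa using h
    have h2 : HasSum (fun i => T ((a i : K))) (T (U.symm a)) := h1.mapL T
    have h3 : ∀ i, T ((a i : K)) = (w i : ℂ) • ((g i : H)) := by
      intro i
      have hρa : ρ i (a i) = g i := (ρ i).apply_symm_apply (g i)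
      have hco : ((g i : H)) = (w i : ℂ)⁻¹ • T ((a i : K)) := by
        rw [← hρa]; rfl
      rw [hco, smul_inv_smul₀ (hw0 i)]
    have h4 : HasSum (fun i => (w i : ℂ) • ((g i : H))) (T (e.symm g)) := by
      rw [hae]
      have hfe : (fun i => T ((a i : K))) = fun i => (w i : ℂ) • ((g i : H)) := funext h3
      rwa [hfe] at h2
    have h5 : ∀ f : H, HasSum (fun i => (w i : ℂ) * (inner ℂ ((g i : H)) f : ℂ))
        ((inner ℂ (T (e.symm g)) f : ℂ)) := by
      intro f
      have h6 := h4.mapL (innerSL ℂ f)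
      have h7 := h6.map (starRingEnd ℂ).toAddMonoidHom continuous_star
      simp only [Function.comp_def, RingHom.toAddMonoidHom_eq_coe, AddMonoidHom.coe_coe,
        innerSL_apply_apply, inner_smul_right, map_mul, inner_conj_symm, Complex.conj_ofReal] at h7
      exact h7
    constructor
    · intro hg
      have h10 := (h5 (T (e.symm g))).unique (hg (T (e.symm g)))
      rwa [inner_self_eq_zero] at h10
    · intro h0 f
      have h11 := h5 f
      rw [h0, inner_zero_left] at h11
      exact h11
  -- the kernel of T maps onto the synthesis kernel
  have hkermap : Submodule.map (e : K →ₗ[ℂ] lp (fun i => (W i : Type u)) 2)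
      (LinearMap.ker (T : K →ₗ[ℂ] H)) = synthesisKernel w W := by
    ext g
    rw [Submodule.mem_map_equiv, LinearMap.mem_ker]
    exact (key g).symm
  have hfinal : fusionExcess w W = Module.rank ℂ (synthesisKernel w W) := rfl
  rw [hfinal, ← hkermap]
  exact ((e.submoduleMap (LinearMap.ker (T : K →ₗ[ℂ] H))).rank_eq).symm

end
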